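/- arXiv:math/0609726 — 2 statements merged into one kernel-verified Lean document; each statement's English description precedes it below -/
import Mathlib

section
/- Let σ, σ' ∈ W and let Θ, Θ' ⊆ I be special. Then σ'R(Θ') ⊆ σR(Θ) if and only if Θ' ⊇ Θ and σ⁻¹σ' ∈ W_{Θ⊥}W_{Θ'}. Consequently, two distinct faces of the Tits cone X of the same type are incomparable under inclusion. -/
open scoped Pointwise

/-- A realization over `ℝ` of a generalized Cartan matrix `A = (a_{ij})_{i,j ∈ I}`.
The space `E` plays the role of `h_ℝ*`; `coroot i` is the linear functional
`λ ↦ λ(h_i)` of evaluation against the simple coroot `h_i`, and `root i` is the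
simple root `α_i ∈ h_ℝ*`. -/
structure GCMRealization where
  I : Type
  E : Type
  [fintypeI : Fintype I]
  [decEqI : DecidableEq I]
  [addCommGroupE : AddCommGroup E]
  [moduleE : Module ℝ E]
  [finiteDimensionalE : FiniteDimensional ℝ E]
  A : I → I → ℤ
  diag : ∀ i, A i i = 2
  offDiag_nonpos : ∀ i j, i ≠ j → A i j ≤ 0
  zero_iff : ∀ i j, A i j = 0 ↔ A j i = 0
  root : I → E
  coroot : I → E →ₗ[ℝ] ℝ
  root_indep : LinearIndependent ℝ root
  coroot_indep : LinearIndependent ℝ coroot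
  pairing : ∀ i j, coroot i (root j) = (A i j : ℝ)

attribute [instance] GCMRealization.fintypeI GCMRealization.decEqI
  GCMRealization.addCommGroupE GCMRealization.moduleE GCMRealization.finiteDimensionalE

namespace GCMRealization

variable (S : GCMRealization)

/-- The group of linear automorphisms of `E`, realized as units of the
endomorphism monoid. -/
abbrev U := (S.E →ₗ[ℝ] S.E)ˣ

/-- Application of a linear automorphism to a vector. -/
def ap (σ : S.U) (x : S.E) : S.E := σ.val x

/-- The simple reflection `σ_i : λ ↦ λ - λ(h_i) α_i` as a linear endomorphism. -/
def sMap (i : S.I) : S.E →ₗ[ℝ] S.E := LinearMap.id - (S.coroot i).smulRight (S.root i)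

lemma sMap_apply (i : S.I) (x : S.E) : S.sMap i x = x - S.coroot i x • S.root i := rfl

lemma sMap_sq (i : S.I) : S.sMap i * S.sMap i = 1 := by
  have h2 : S.coroot i (S.root i) = 2 := by
    rw [S.pairing, S.diag]; norm_num
  ext x
  rw [Module.End.mul_apply, Module.End.one_apply, sMap_apply, sMap_apply, map_sub, map_smul, h2,
    smul_eq_mul]
  have h3 : S.coroot i x - S.coroot i x * 2 = -(S.coroot i x) := by ring
  rw [h3, neg_smul, sub_neg_eq_add]
  abel

/-- The simple reflection `σ_i` as a linear automorphism. -/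
def sUnit (i : S.I) : S.U := ⟨S.sMap i, S.sMap i, S.sMap_sq i, S.sMap_sq i⟩

/-- The Weyl group `W`, generated by the simple reflections. -/
def W : Subgroup S.U := Subgroup.closure (Set.range S.sUnit)

/-- The standard parabolic subgroup `W_J`, generated by `{σ_i : i ∈ J}`. -/
def WJ (J : Set S.I) : Subgroup S.U := Subgroup.closure (S.sUnit '' J)

lemma WJ_le_W (J : Set S.I) : S.WJ J ≤ S.W :=
  Subgroup.closure_mono (Set.image_subset_range _ _)

lemma ap_mul (σ τ : S.U) (x : S.E) : S.ap (σ * τ) x = S.ap σ (S.ap τ x) := rfl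

lemma ap_one (x : S.E) : S.ap 1 x = x := rfl

/-- The closed fundamental chamber `C̄`. -/
def chamber : Set S.E := { x | ∀ i, 0 ≤ S.coroot i x }

/-- The Tits cone `X = W ⬝ C̄`. -/
def titsCone : Set S.E := { x | ∃ σ ∈ S.W, ∃ y ∈ S.chamber, x = S.ap σ y }

/-- The open facet `F_J` of type `J`. -/
def openFacet (J : Set S.I) : Set S.E :=
  { x | (∀ i ∈ J, S.coroot i x = 0) ∧ ∀ i, i ∉ J → 0 < S.coroot i x }

/-- The closed facet `F̄_J` of type `J`. -/
def closedFacet (J : Set S.I) : Set S.E :=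
  { x | (∀ i ∈ J, S.coroot i x = 0) ∧ ∀ i, i ∉ J → 0 ≤ S.coroot i x }

/-- A face of the Tits cone, in the sense of convex geometry: an extreme convex
subcone of the convex cone `X`. -/
def IsFace (F : Set S.E) : Prop :=
  Convex ℝ F ∧ (∀ c : ℝ, 0 ≤ c → ∀ x ∈ F, c • x ∈ F) ∧ IsExtreme ℝ S.titsCone F

/-- The set `Fa(X)` of faces of the Tits cone. -/
def faces : Set (Set S.E) := { F | S.IsFace F }

lemma faces_subset {F : Set S.E} (h : F ∈ S.faces) : F ⊆ S.titsCone := h.2.2.1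

/-- Two indices of `Θ` are linked if they are joined by an edge of the Coxeter
diagram of the submatrix `A_Θ`. -/
def connRel (Θ : Set S.I) (i j : S.I) : Prop := i ∈ Θ ∧ j ∈ Θ ∧ S.A i j ≠ 0

/-- The index set of the connected component of `i` in the submatrix `A_Θ`. -/
def component (Θ : Set S.I) (i : S.I) : Set S.I :=
  { j | j ∈ Θ ∧ Relation.ReflTransGen (S.connRel Θ) i j }

/-- A subset `K ⊆ I` is of finite type iff its Weyl group `W_K` is finite. -/
def finType (K : Set S.I) : Prop := Finite (S.WJ K)

/-- `Θ^∞`: the union of the index sets of the connected components of `A_Θ` of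
non-finite type. -/
def infpart (Θ : Set S.I) : Set S.I := { i | i ∈ Θ ∧ ¬ S.finType (S.component Θ i) }

/-- `Θ⁰`: the union of the index sets of the connected components of `A_Θ` of
finite type. -/
def finpart (Θ : Set S.I) : Set S.I := { i | i ∈ Θ ∧ S.finType (S.component Θ i) }

/-- `Θ` is special if `Θ = Θ^∞`. -/
def special (Θ : Set S.I) : Prop := S.infpart Θ = Θ

/-- `J⊥ = { i ∈ I : a_{ij} = 0 for all j ∈ J }`. -/
def perp (J : Set S.I) : Set S.I := { i | ∀ j ∈ J, S.A i j = 0 }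

/-- The special face `R(Θ) = W_{Θ⊥} ⬝ F̄_Θ` of the Tits cone. -/
def faceR (Θ : Set S.I) : Set S.E :=
  { x | ∃ σ ∈ S.WJ (S.perp Θ), ∃ y ∈ S.closedFacet Θ, x = S.ap σ y }

lemma closedFacet_subset_chamber (J : Set S.I) : S.closedFacet J ⊆ S.chamber := by
  intro x hx i
  by_cases hi : i ∈ J
  · exact le_of_eq (hx.1 i hi).symm
  · exact hx.2 i hi

lemma chamber_subset_titsCone : S.chamber ⊆ S.titsCone :=
  fun x hx => ⟨1, one_mem _, x, hx, rfl⟩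

lemma ap_mem_titsCone {σ : S.U} (hσ : σ ∈ S.W) {x : S.E} (hx : x ∈ S.titsCone) :
    S.ap σ x ∈ S.titsCone := by
  obtain ⟨τ, hτ, y, hy, rfl⟩ := hx
  exact ⟨σ * τ, mul_mem hσ hτ, y, hy, rfl⟩

lemma faceR_subset (Θ : Set S.I) : S.faceR Θ ⊆ S.titsCone := by
  rintro x ⟨σ, hσ, y, hy, rfl⟩
  exact S.ap_mem_titsCone (S.WJ_le_W _ hσ)
    (S.chamber_subset_titsCone (S.closedFacet_subset_chamber Θ hy))

/-- The product of the word `l` in the simple reflections. -/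
def wordProd (l : List S.I) : S.U := (l.map S.sUnit).prod

/-- The length of an element of the Weyl group: the length of a shortest
expression as a product of simple reflections. -/
noncomputable def length (σ : S.U) : ℕ :=
  sInf { n | ∃ l : List S.I, l.length = n ∧ S.wordProd l = σ }

/-- `l` is a reduced expression of `σ`. -/
def IsReduced (l : List S.I) (σ : S.U) : Prop :=
  S.wordProd l = σ ∧ l.length = S.length σ

/-- `red σ`: the set of indices of simple reflections occurring in a reduced
expression of `σ` (by a result of J. Tits this set does not depend on the
choice of reduced expression). -/
def red (σ : S.U) : Set S.I := { i | ∃ l : List S.I, S.IsReduced l σ ∧ i ∈ l }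

/-- `W^J`: the minimal length representatives of the cosets `W/W_J`. -/
def minRight (J : Set S.I) : Set S.U :=
  { σ | σ ∈ S.W ∧ ∀ τ ∈ S.WJ J, S.length σ ≤ S.length (σ * τ) }

/-- `^K W`: the minimal length representatives of the cosets `W_K\W`. -/
def minLeft (K : Set S.I) : Set S.U :=
  { σ | σ ∈ S.W ∧ ∀ κ ∈ S.WJ K, S.length σ ≤ S.length (κ * σ) }

/-- `^K W^J`: the minimal length representatives of the double cosets
`W_K\W/W_J`. -/
def minDouble (K J : Set S.I) : Set S.U :=
  { σ | σ ∈ S.W ∧ ∀ κ ∈ S.WJ K, ∀ τ ∈ S.WJ J, S.length σ ≤ S.length (κ * σ * τ) }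

/-- `(W_L)^{J'}`: the minimal length representatives within `W_L` of the cosets
`W_L/W_{J'}`. -/
def minRightIn (L J' : Set S.I) : Set S.U :=
  { σ | σ ∈ S.WJ L ∧ ∀ τ ∈ S.WJ J', S.length σ ≤ S.length (σ * τ) }

/-- Pairs `(σ, R)` with `σ ∈ W` and `R ⊆ X`, the raw material for the face
monoid: `(σ, R)` represents the element `σ ε(R)`. -/
structure PreHat (S : GCMRealization) where
  w : S.W
  carrier : Set S.E
  subX : carrier ⊆ S.titsCone

lemma PreHat.ext' : ∀ {p q : S.PreHat}, p.w = q.w → p.carrier = q.carrier → p = q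
  | ⟨_, _, _⟩, ⟨_, _, _⟩, h1, h2 => by cases h1; cases h2; rfl

instance : One S.PreHat := ⟨⟨1, S.titsCone, subset_rfl⟩⟩

/-- The semidirect product multiplication `(σ, R)(τ, T) = (στ, τ⁻¹R ∩ T)`. -/
instance : Mul S.PreHat :=
  ⟨fun p q => ⟨p.w * q.w, S.ap ↑q.w ⁻¹' p.carrier ∩ q.carrier,
    fun _ hx => q.subX hx.2⟩⟩

lemma PreHat.mul_w (p q : S.PreHat) : (p * q).w = p.w * q.w := rfl

lemma PreHat.mul_carrier (p q : S.PreHat) :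
    (p * q).carrier = S.ap ↑q.w ⁻¹' p.carrier ∩ q.carrier := rfl

lemma PreHat.one_w : (1 : S.PreHat).w = 1 := rfl

lemma PreHat.one_carrier : (1 : S.PreHat).carrier = S.titsCone := rfl

instance : Monoid S.PreHat where
  mul_assoc p q r := by
    refine PreHat.ext' S (mul_assoc _ _ _) ?_
    ext x
    simp only [PreHat.mul_carrier, PreHat.mul_w, Set.mem_inter_iff, Set.mem_preimage,
      Subgroup.coe_mul, S.ap_mul]
    tauto
  one_mul p := by
    refine PreHat.ext' S (one_mul _) ?_
    ext x
    simp only [PreHat.mul_carrier, PreHat.one_carrier, Set.mem_inter_iff, Set.mem_preimage]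
    exact ⟨fun h => h.2, fun h => ⟨S.ap_mem_titsCone p.w.2 (p.subX h), h⟩⟩
  mul_one p := by
    refine PreHat.ext' S (mul_one _) ?_
    ext x
    simp only [PreHat.mul_carrier, PreHat.one_carrier, Set.mem_inter_iff, Set.mem_preimage,
      OneMemClass.coe_one, S.ap_one]
    exact ⟨fun h => h.1, fun h => ⟨h, p.subX h⟩⟩

/-- The congruence relation `σ ε(R) = σ' ε(R') ⟺ R = R'` and `σ⁻¹σ'` fixes `R`
pointwise. -/
def hatCon : Con S.PreHat where
  r p q := p.carrier = q.carrier ∧ ∀ x ∈ p.carrier, S.ap ↑p.w x = S.ap ↑q.w x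
  iseqv :=
    { refl := fun p => ⟨rfl, fun _ _ => rfl⟩
      symm := fun {p q} h => ⟨h.1.symm, fun x hx => (h.2 x (h.1 ▸ hx)).symm⟩
      trans := fun {p q r} h h' =>
        ⟨h.1.trans h'.1, fun x hx => (h.2 x hx).trans (h'.2 x (h.1 ▸ hx))⟩ }
  mul' := by
    rintro p p' q q' ⟨hc, hw⟩ ⟨hc', hw'⟩
    constructor
    · ext x
      simp only [PreHat.mul_carrier, Set.mem_inter_iff, Set.mem_preimage]
      constructor
      · rintro ⟨h1, h2⟩
        exact ⟨by rw [← hw' x h2, ← hc]; exact h1, hc' ▸ h2⟩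
      · rintro ⟨h1, h2⟩
        have h2' : x ∈ q.carrier := hc' ▸ h2
        exact ⟨by rw [hc, hw' x h2']; exact h1, h2'⟩
    · rintro x ⟨h1, h2⟩
      simp only [PreHat.mul_w, Subgroup.coe_mul, S.ap_mul]
      rw [hw _ h1, hw' x h2]

/-- The monoid in which the face monoid `Ŵ` lives: the quotient of the
semidirect product by the congruence. -/
def FM := S.hatCon.Quotient

noncomputable instance : Monoid S.FM := by unfold FM; infer_instance

/-- The class of the pair `(σ, R)` in the quotient. -/
def fmk (p : S.PreHat) : S.FM := S.hatCon.mk' p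

/-- The element `σ = σ ε(X)` of the face monoid. -/
def wEl (σ : S.W) : S.FM := S.fmk ⟨σ, S.titsCone, subset_rfl⟩

/-- The idempotent `ε(R)` for `R ⊆ X`. -/
def eps (R : Set S.E) (h : R ⊆ S.titsCone) : S.FM := S.fmk ⟨1, R, h⟩

/-- The idempotent `ε(R(Θ))`. -/
def faceEl (Θ : Set S.I) : S.FM := S.eps (S.faceR Θ) (S.faceR_subset Θ)

/-- The element `σ ε(R)` of the face monoid. -/
def genEl (σ : S.W) (R : Set S.E) (h : R ⊆ S.titsCone) : S.FM := S.fmk ⟨σ, R, h⟩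

/-- The image of the Weyl group `W` in the face monoid. -/
def Wset : Set S.FM := Set.range S.wEl

/-- The set `E = {ε(R) : R ∈ Fa(X)}` of idempotents of the face monoid. -/
def Eset : Set S.FM := { x | ∃ R, ∃ h : R ∈ S.faces, x = S.eps R (S.faces_subset h) }

/-- The face monoid `Ŵ` associated to the Weyl group `W`: the submonoid
generated by `W` and the idempotents `ε(R)`, `R` a face of the Tits cone;
its elements are exactly the `σ ε(R)` with `σ ∈ W` and `R ∈ Fa(X)`. -/
noncomputable def hatW : Submonoid S.FM := Submonoid.closure (S.Wset ∪ S.Eset)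

/-- The image of the parabolic subgroup `W_J` in the face monoid. -/
def WJset (J : Set S.I) : Set S.FM :=
  { x | ∃ σ, ∃ h : σ ∈ S.WJ J, x = S.wEl ⟨σ, S.WJ_le_W J h⟩ }

/-- The set `E_J = {ε(R) : R ∈ Fa(X), R ⊇ R(J^∞)}`. -/
def EJset (J : Set S.I) : Set S.FM :=
  { x | ∃ R, ∃ h : R ∈ S.faces, S.faceR (S.infpart J) ⊆ R ∧ x = S.eps R (S.faces_subset h) }

/-- The standard parabolic submonoid `Ŵ_J = W_J ⬝ E_J` of the face monoid. -/
def hatWJ (J : Set S.I) : Set S.FM := S.WJset J * S.EJset J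

/-- The coset `σ W_J`, an element of the Coxeter complex. -/
def coset (σ : S.U) (J : Set S.I) : Set S.U := { τ | ∃ w ∈ S.WJ J, τ = σ * w }

/-- The Coxeter complex `C = {σ W_J : σ ∈ W, J ⊆ I}`, partially ordered by
reverse inclusion. -/
def Cox : Set (Set S.U) := { c | ∃ σ ∈ S.W, ∃ J : Set S.I, c = S.coset σ J }

/-- Left translation, giving the action of `W` on the Coxeter complex. -/
def lmul (σ : S.U) (c : Set S.U) : Set S.U := (fun τ => σ * τ) '' c

/-- `W_Θ↓ = {V ∈ C : V ≤ W_Θ} = {V ∈ C : V ⊇ W_Θ}`. -/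
def downW (Θ : Set S.I) : Set (Set S.U) := { V | V ∈ S.Cox ∧ S.coset 1 Θ ⊆ V }

/-- The set of cosets `W_{Θ⊥} ⬝ (W_Θ↓)`. -/
def dSet (Θ : Set S.I) : Set (Set S.U) :=
  { c | ∃ a ∈ S.WJ (S.perp Θ), ∃ V ∈ S.downW Θ, c = S.lmul a V }

end GCMRealization

namespace GCMRealization

open scoped Pointwise

-- ===== AUXILIARY MATERIAL =====


/-- Alternating boolean word of given length starting with `x`. -/
def altB : Bool → ℕ → List Bool
  | _, 0 => []
  | x, (k+1) => x :: altB (!x) k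

@[simp] lemma altB_zero (x : Bool) : altB x 0 = [] := rfl
@[simp] lemma altB_succ (x : Bool) (k : ℕ) : altB x (k+1) = x :: altB (!x) k := rfl

/-- Coefficient matrix for the action of a word (encoded over `Bool`,
`true` = first letter, `false` = second letter) on the two coroots. -/
def m2b (a b : ℝ) : List Bool → (ℝ × ℝ) × (ℝ × ℝ)
  | [] => ((1, 0), (0, 1))
  | true :: l =>
      ((-(m2b a b l).1.1, -(m2b a b l).1.2),
       ((m2b a b l).2.1 - b * (m2b a b l).1.1, (m2b a b l).2.2 - b * (m2b a b l).1.2))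
  | false :: l =>
      (((m2b a b l).1.1 - a * (m2b a b l).2.1, (m2b a b l).1.2 - a * (m2b a b l).2.2),
       (-(m2b a b l).2.1, -(m2b a b l).2.2))

/-- Coefficient data for the action of a word on a vector. -/
def lcoefb (a b : ℝ) : List Bool → (ℝ × ℝ) × (ℝ × ℝ)
  | [] => ((0, 0), (0, 0))
  | true :: l =>
      ((-(lcoefb a b l).1.1 - a * (lcoefb a b l).2.1 - 1,
        -(lcoefb a b l).1.2 - a * (lcoefb a b l).2.2),
       ((lcoefb a b l).2.1, (lcoefb a b l).2.2))
  | false :: l =>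
      (((lcoefb a b l).1.1, (lcoefb a b l).1.2),
       (-(lcoefb a b l).2.1 - b * (lcoefb a b l).1.1,
        -(lcoefb a b l).2.2 - b * (lcoefb a b l).1.2 - 1))


lemma m2b_true_cons (a b : ℝ) (l : List Bool) :
    m2b a b (true :: l) =
      ((-(m2b a b l).1.1, -(m2b a b l).1.2),
       ((m2b a b l).2.1 - b * (m2b a b l).1.1, (m2b a b l).2.2 - b * (m2b a b l).1.2)) := rfl

lemma m2b_false_cons (a b : ℝ) (l : List Bool) :
    m2b a b (false :: l) =
      (((m2b a b l).1.1 - a * (m2b a b l).2.1, (m2b a b l).1.2 - a * (m2b a b l).2.2),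
       (-(m2b a b l).2.1, -(m2b a b l).2.2)) := rfl

def InvN (b : ℝ) (m : (ℝ × ℝ) × (ℝ × ℝ)) : Prop :=
  0 ≤ m.1.1 ∧ 0 ≤ m.1.2 ∧ m.2.1 ≤ 0 ∧ m.2.2 ≤ 0 ∧
    0 ≤ -b * m.1.1 + 2 * m.2.1 ∧ 0 ≤ -b * m.1.2 + 2 * m.2.2

def InvP (a : ℝ) (m : (ℝ × ℝ) × (ℝ × ℝ)) : Prop :=
  m.1.1 ≤ 0 ∧ m.1.2 ≤ 0 ∧ 0 ≤ m.2.1 ∧ 0 ≤ m.2.2 ∧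
    0 ≤ -a * m.2.1 + 2 * m.1.1 ∧ 0 ≤ -a * m.2.2 + 2 * m.1.2

lemma inv4 (a b : ℝ) (ha : a ≤ 0) (hb : b ≤ 0) (h4 : 4 ≤ a * b) :
    ∀ k, InvN b (m2b a b (altB false (k+1))) ∧ InvP a (m2b a b (altB true (k+1))) := by
  intro k
  induction k with
  | zero =>
      constructor
      · simp only [altB_succ, Bool.not_false, altB_zero, m2b, InvN]
        refine ⟨by norm_num, by linarith, by norm_num, by norm_num, by nlinarith, by nlinarith⟩
      · simp only [altB_succ, Bool.not_true, altB_zero, m2b, InvP]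
        refine ⟨by norm_num, by norm_num, by linarith, by norm_num, by nlinarith, by nlinarith⟩
  | succ k ih =>
      obtain ⟨hN, hP⟩ := ih
      constructor
      · have h : altB false (k+2) = false :: altB true (k+1) := rfl
        rw [h, m2b_false_cons]
        set m := m2b a b (altB true (k+1)) with hm
        obtain ⟨p1, p2, p3, p4, p5, p6⟩ := hP
        refine ⟨by dsimp only; linarith, by dsimp only; linarith, by dsimp only; linarith, by dsimp only; linarith, ?_, ?_⟩
        · simp only
          nlinarith [mul_nonneg (neg_nonneg.mpr hb) p5,
            mul_nonneg (by linarith : (0:ℝ) ≤ a * b - 4) p3]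
        · simp only
          nlinarith [mul_nonneg (neg_nonneg.mpr hb) p6,
            mul_nonneg (by linarith : (0:ℝ) ≤ a * b - 4) p4]
      · have h : altB true (k+2) = true :: altB false (k+1) := rfl
        rw [h, m2b_true_cons]
        set m := m2b a b (altB false (k+1)) with hm
        obtain ⟨n1, n2, n3, n4, n5, n6⟩ := hN
        refine ⟨by dsimp only; linarith, by dsimp only; linarith, by dsimp only; linarith, by dsimp only; linarith, ?_, ?_⟩
        · simp only
          nlinarith [mul_nonneg (neg_nonneg.mpr ha) n5,
            mul_nonneg (by linarith : (0:ℝ) ≤ a * b - 4) n1]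
        · simp only
          nlinarith [mul_nonneg (neg_nonneg.mpr ha) n6,
            mul_nonneg (by linarith : (0:ℝ) ≤ a * b - 4) n2]

lemma m2b_nonneg_of_four_le (a b : ℝ) (ha : a ≤ 0) (hb : b ≤ 0) (h4 : 4 ≤ a * b) (k : ℕ) :
    0 ≤ (m2b a b (altB false k)).1.1 ∧ 0 ≤ (m2b a b (altB false k)).1.2 := by
  cases k with
  | zero => simp [m2b]
  | succ k => exact ⟨(inv4 a b ha hb h4 k).1.1, (inv4 a b ha hb h4 k).1.2.1⟩

-- finite-type rank 2 cases: explicit computations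
lemma braid00 : lcoefb 0 0 (altB false 2) = lcoefb 0 0 (altB true 2) := by
  norm_num [altB, lcoefb]

lemma braid11 : lcoefb (-1) (-1) (altB false 3) = lcoefb (-1) (-1) (altB true 3) := by
  norm_num [altB, lcoefb]

lemma braid12 : lcoefb (-1) (-2) (altB false 4) = lcoefb (-1) (-2) (altB true 4) := by
  norm_num [altB, lcoefb]

lemma braid21 : lcoefb (-2) (-1) (altB false 4) = lcoefb (-2) (-1) (altB true 4) := by
  norm_num [altB, lcoefb]

lemma braid13 : lcoefb (-1) (-3) (altB false 6) = lcoefb (-1) (-3) (altB true 6) := by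
  norm_num [altB, lcoefb]

lemma braid31 : lcoefb (-3) (-1) (altB false 6) = lcoefb (-3) (-1) (altB true 6) := by
  norm_num [altB, lcoefb]

lemma nn00 : ∀ k < 2, 0 ≤ (m2b 0 0 (altB false k)).1.1 ∧ 0 ≤ (m2b 0 0 (altB false k)).1.2 := by
  intro k hk; interval_cases k <;> norm_num [altB, m2b]

lemma nn11 : ∀ k < 3, 0 ≤ (m2b (-1) (-1) (altB false k)).1.1 ∧ 0 ≤ (m2b (-1) (-1) (altB false k)).1.2 := by
  intro k hk; interval_cases k <;> norm_num [altB, m2b]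

lemma nn12 : ∀ k < 4, 0 ≤ (m2b (-1) (-2) (altB false k)).1.1 ∧ 0 ≤ (m2b (-1) (-2) (altB false k)).1.2 := by
  intro k hk; interval_cases k <;> norm_num [altB, m2b]

lemma nn21 : ∀ k < 4, 0 ≤ (m2b (-2) (-1) (altB false k)).1.1 ∧ 0 ≤ (m2b (-2) (-1) (altB false k)).1.2 := by
  intro k hk; interval_cases k <;> norm_num [altB, m2b]

lemma nn13 : ∀ k < 6, 0 ≤ (m2b (-1) (-3) (altB false k)).1.1 ∧ 0 ≤ (m2b (-1) (-3) (altB false k)).1.2 := by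
  intro k hk; interval_cases k <;> norm_num [altB, m2b]

lemma nn31 : ∀ k < 6, 0 ≤ (m2b (-3) (-1) (altB false k)).1.1 ∧ 0 ≤ (m2b (-3) (-1) (altB false k)).1.2 := by
  intro k hk; interval_cases k <;> norm_num [altB, m2b]

lemma altB_split (p q : ℕ) (x : Bool) : ∃ y, altB x (p + q) = altB x p ++ altB y q := by
  induction p generalizing x with
  | zero => exact ⟨x, by simp⟩
  | succ p ih =>
      obtain ⟨y, hy⟩ := ih (!x)
      exact ⟨y, by simp [Nat.succ_add, hy]⟩


-- ===== CHUNK B =====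

section WordBasics

variable (S : GCMRealization)

lemma wordProd_nil : S.wordProd [] = 1 := rfl

lemma wordProd_cons (i : S.I) (l : List S.I) :
    S.wordProd (i :: l) = S.sUnit i * S.wordProd l := by
  simp [wordProd]

lemma wordProd_append (l₁ l₂ : List S.I) :
    S.wordProd (l₁ ++ l₂) = S.wordProd l₁ * S.wordProd l₂ := by
  simp [wordProd]

lemma sUnit_mul_self (i : S.I) : S.sUnit i * S.sUnit i = 1 :=
  Units.ext (S.sMap_sq i)

lemma sUnit_inv (i : S.I) : (S.sUnit i)⁻¹ = S.sUnit i :=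
  inv_eq_of_mul_eq_one_right (S.sUnit_mul_self i)

lemma wordProd_singleton (i : S.I) : S.wordProd [i] = S.sUnit i := by
  simp [wordProd]

lemma wordProd_reverse (l : List S.I) : S.wordProd l.reverse = (S.wordProd l)⁻¹ := by
  induction l with
  | nil => simp [wordProd]
  | cons i l ih =>
      rw [List.reverse_cons, S.wordProd_append, S.wordProd_cons, ih,
        S.wordProd_nil, mul_one, S.wordProd_cons, mul_inv_rev, S.sUnit_inv]

lemma sUnit_mem_W (i : S.I) : S.sUnit i ∈ S.W :=
  Subgroup.subset_closure ⟨i, rfl⟩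

lemma sUnit_mem_WJ {J : Set S.I} {i : S.I} (h : i ∈ J) : S.sUnit i ∈ S.WJ J :=
  Subgroup.subset_closure ⟨i, h, rfl⟩

lemma wordProd_mem_WJ (J : Set S.I) (l : List S.I) (h : ∀ r ∈ l, r ∈ J) :
    S.wordProd l ∈ S.WJ J := by
  induction l with
  | nil => exact one_mem _
  | cons i l ih =>
      rw [S.wordProd_cons]
      exact mul_mem (S.sUnit_mem_WJ (h i (by simp)))
        (ih fun r hr => h r (by simp [hr]))

lemma wordProd_mem_W (l : List S.I) : S.wordProd l ∈ S.W := by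
  induction l with
  | nil => exact one_mem _
  | cons i l ih => rw [S.wordProd_cons]; exact mul_mem (S.sUnit_mem_W i) ih

lemma exists_word_of_mem_W {σ : S.U} (h : σ ∈ S.W) : ∃ l, S.wordProd l = σ := by
  let Wd : Subgroup S.U :=
    { carrier := {σ | ∃ l, S.wordProd l = σ}
      one_mem' := ⟨[], rfl⟩
      mul_mem' := by
        rintro x y ⟨l₁, h₁⟩ ⟨l₂, h₂⟩
        exact ⟨l₁ ++ l₂, by rw [S.wordProd_append, h₁, h₂]⟩
      inv_mem' := by
        rintro x ⟨l, hl⟩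
        exact ⟨l.reverse, by rw [S.wordProd_reverse, hl]⟩ }
  have hle : S.W ≤ Wd := by
    rw [W, Subgroup.closure_le]
    rintro _ ⟨i, rfl⟩
    exact ⟨[i], S.wordProd_singleton i⟩
  exact hle h

lemma length_le {σ : S.U} (l : List S.I) (h : S.wordProd l = σ) :
    S.length σ ≤ l.length :=
  Nat.sInf_le ⟨l, rfl, h⟩

lemma exists_reduced {σ : S.U} (h : σ ∈ S.W) :
    ∃ l, S.wordProd l = σ ∧ l.length = S.length σ := by
  have hne : {n | ∃ l : List S.I, l.length = n ∧ S.wordProd l = σ}.Nonempty := by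
    obtain ⟨l, hl⟩ := S.exists_word_of_mem_W h
    exact ⟨l.length, l, rfl, hl⟩
  obtain ⟨l, hl1, hl2⟩ := Nat.sInf_mem hne
  exact ⟨l, hl2, hl1⟩

lemma eq_one_of_length_eq_zero {σ : S.U} (h : σ ∈ S.W) (h0 : S.length σ = 0) :
    σ = 1 := by
  obtain ⟨l, hl, hlen⟩ := S.exists_reduced h
  rw [h0, List.length_eq_zero_iff] at hlen
  rw [← hl, hlen]; rfl

lemma length_inv {σ : S.U} (h : σ ∈ S.W) : S.length σ⁻¹ = S.length σ := by
  have key : ∀ τ : S.U, τ ∈ S.W → S.length τ⁻¹ ≤ S.length τ := by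
    intro τ hτ
    obtain ⟨l, hl, hlen⟩ := S.exists_reduced hτ
    have := S.length_le l.reverse (by rw [S.wordProd_reverse, hl])
    simpa [hlen] using this
  refine le_antisymm (key σ h) ?_
  have := key σ⁻¹ (inv_mem h)
  simpa using this

lemma length_sUnit_mul_le (i : S.I) {σ : S.U} (h : σ ∈ S.W) :
    S.length (S.sUnit i * σ) ≤ S.length σ + 1 := by
  obtain ⟨l, hl, hlen⟩ := S.exists_reduced h
  have := S.length_le (i :: l) (by rw [S.wordProd_cons, hl])
  simpa [hlen] using this

lemma length_le_sUnit_mul_add (i : S.I) {σ : S.U} (h : σ ∈ S.W) :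
    S.length σ ≤ S.length (S.sUnit i * σ) + 1 := by
  have h2 := S.length_sUnit_mul_le i (mul_mem (S.sUnit_mem_W i) h)
  rwa [← mul_assoc, S.sUnit_mul_self, one_mul] at h2

lemma length_mul_sUnit_le (i : S.I) {σ : S.U} (h : σ ∈ S.W) :
    S.length (σ * S.sUnit i) ≤ S.length σ + 1 := by
  obtain ⟨l, hl, hlen⟩ := S.exists_reduced h
  have := S.length_le (l ++ [i])
    (by rw [S.wordProd_append, hl, S.wordProd_singleton])
  simpa [hlen] using this

end WordBasics

lemma altB_length (x : Bool) (k : ℕ) : (altB x k).length = k := by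
  induction k generalizing x with
  | zero => rfl
  | succ k ih => simp [altB_succ, ih]

section Rank2

variable (S : GCMRealization)

/-- The word in `I` corresponding to a boolean word; `true ↦ i`, `false ↦ t`. -/
def word2 (i t : S.I) (lb : List Bool) : List S.I := lb.map (fun x => if x then i else t)

lemma word2_nil (i t : S.I) : S.word2 i t [] = [] := rfl

lemma word2_true_cons (i t : S.I) (lb : List Bool) :
    S.word2 i t (true :: lb) = i :: S.word2 i t lb := rfl

lemma word2_false_cons (i t : S.I) (lb : List Bool) :
    S.word2 i t (false :: lb) = t :: S.word2 i t lb := rfl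

lemma word2_append (i t : S.I) (l₁ l₂ : List Bool) :
    S.word2 i t (l₁ ++ l₂) = S.word2 i t l₁ ++ S.word2 i t l₂ :=
  List.map_append

lemma word2_length (i t : S.I) (lb : List Bool) :
    (S.word2 i t lb).length = lb.length := List.length_map _

lemma ap_sUnit (i : S.I) (y : S.E) :
    S.ap (S.sUnit i) y = y - S.coroot i y • S.root i := rfl

lemma ap_wordProd_cons (r : S.I) (l : List S.I) (x : S.E) :
    S.ap (S.wordProd (r :: l)) x
      = S.ap (S.wordProd l) x - S.coroot r (S.ap (S.wordProd l) x) • S.root r := by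
  rw [S.wordProd_cons, S.ap_mul, S.ap_sUnit]

/-- Pointwise coefficient formula for the coroots composed with a rank-2 word. -/
lemma m2b_spec (i t : S.I) (lb : List Bool) (x : S.E) :
    S.coroot i (S.ap (S.wordProd (S.word2 i t lb)) x)
        = (m2b (S.A i t : ℝ) (S.A t i : ℝ) lb).1.1 * S.coroot i x
          + (m2b (S.A i t : ℝ) (S.A t i : ℝ) lb).1.2 * S.coroot t x
    ∧ S.coroot t (S.ap (S.wordProd (S.word2 i t lb)) x)
        = (m2b (S.A i t : ℝ) (S.A t i : ℝ) lb).2.1 * S.coroot i x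
          + (m2b (S.A i t : ℝ) (S.A t i : ℝ) lb).2.2 * S.coroot t x := by
  induction lb with
  | nil =>
      constructor <;> simp [m2b, word2_nil, wordProd_nil, ap_one]
  | cons c lb ih =>
      obtain ⟨ih1, ih2⟩ := ih
      cases c
      · rw [S.word2_false_cons]
        rw [S.ap_wordProd_cons, m2b_false_cons]
        constructor
        · rw [map_sub, map_smul, smul_eq_mul, S.pairing, ih1, ih2]
          dsimp only
          push_cast
          ring
        · rw [map_sub, map_smul, smul_eq_mul, S.pairing, S.diag, ih2]
          dsimp only
          push_cast
          ring
      · rw [S.word2_true_cons]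
        rw [S.ap_wordProd_cons, m2b_true_cons]
        constructor
        · rw [map_sub, map_smul, smul_eq_mul, S.pairing, S.diag, ih1]
          dsimp only
          push_cast
          ring
        · rw [map_sub, map_smul, smul_eq_mul, S.pairing, ih1, ih2]
          dsimp only
          push_cast
          ring

lemma lcoefb_true_cons (a b : ℝ) (l : List Bool) :
    lcoefb a b (true :: l) =
      ((-(lcoefb a b l).1.1 - a * (lcoefb a b l).2.1 - 1,
        -(lcoefb a b l).1.2 - a * (lcoefb a b l).2.2),
       ((lcoefb a b l).2.1, (lcoefb a b l).2.2)) := rfl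

lemma lcoefb_false_cons (a b : ℝ) (l : List Bool) :
    lcoefb a b (false :: l) =
      (((lcoefb a b l).1.1, (lcoefb a b l).1.2),
       (-(lcoefb a b l).2.1 - b * (lcoefb a b l).1.1,
        -(lcoefb a b l).2.2 - b * (lcoefb a b l).1.2 - 1)) := rfl

/-- Pointwise formula for the action of a rank-2 word. -/
lemma lcoefb_spec (i t : S.I) (lb : List Bool) (x : S.E) :
    S.ap (S.wordProd (S.word2 i t lb)) x
      = x + ((lcoefb (S.A i t : ℝ) (S.A t i : ℝ) lb).1.1 * S.coroot i x
              + (lcoefb (S.A i t : ℝ) (S.A t i : ℝ) lb).1.2 * S.coroot t x) • S.root i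
          + ((lcoefb (S.A i t : ℝ) (S.A t i : ℝ) lb).2.1 * S.coroot i x
              + (lcoefb (S.A i t : ℝ) (S.A t i : ℝ) lb).2.2 * S.coroot t x) • S.root t := by
  induction lb with
  | nil => simp [lcoefb, word2_nil, wordProd_nil, ap_one]
  | cons c lb ih
 =>
      cases c
      · rw [S.word2_false_cons, S.ap_wordProd_cons, ih, lcoefb_false_cons]
        have hc : S.coroot t
            (x + ((lcoefb (S.A i t : ℝ) (S.A t i : ℝ) lb).1.1 * S.coroot i x
              + (lcoefb (S.A i t : ℝ) (S.A t i : ℝ) lb).1.2 * S.coroot t x) • S.root i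
            + ((lcoefb (S.A i t : ℝ) (S.A t i : ℝ) lb).2.1 * S.coroot i x
              + (lcoefb (S.A i t : ℝ) (S.A t i : ℝ) lb).2.2 * S.coroot t x) • S.root t)
            = S.coroot t x
              + ((lcoefb (S.A i t : ℝ) (S.A t i : ℝ) lb).1.1 * S.coroot i x
                + (lcoefb (S.A i t : ℝ) (S.A t i : ℝ) lb).1.2 * S.coroot t x) * (S.A t i : ℝ)
              + ((lcoefb (S.A i t : ℝ) (S.A t i : ℝ) lb).2.1 * S.coroot i x
                + (lcoefb (S.A i t : ℝ) (S.A t i : ℝ) lb).2.2 * S.coroot t x) * 2 := by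
          rw [map_add, map_add, map_smul, map_smul, smul_eq_mul, smul_eq_mul,
            S.pairing, S.pairing, S.diag]
          push_cast
          ring
        rw [hc]
        dsimp only
        module
      · rw [S.word2_true_cons, S.ap_wordProd_cons, ih, lcoefb_true_cons]
        have hc : S.coroot i
            (x + ((lcoefb (S.A i t : ℝ) (S.A t i : ℝ) lb).1.1 * S.coroot i x
              + (lcoefb (S.A i t : ℝ) (S.A t i : ℝ) lb).1.2 * S.coroot t x) • S.root i
            + ((lcoefb (S.A i t : ℝ) (S.A t i : ℝ) lb).2.1 * S.coroot i x
              + (lcoefb (S.A i t : ℝ) (S.A t i : ℝ) lb).2.2 * S.coroot t x) • S.root t)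
            = S.coroot i x
              + ((lcoefb (S.A i t : ℝ) (S.A t i : ℝ) lb).1.1 * S.coroot i x
                + (lcoefb (S.A i t : ℝ) (S.A t i : ℝ) lb).1.2 * S.coroot t x) * 2
              + ((lcoefb (S.A i t : ℝ) (S.A t i : ℝ) lb).2.1 * S.coroot i x
                + (lcoefb (S.A i t : ℝ) (S.A t i : ℝ) lb).2.2 * S.coroot t x) * (S.A i t : ℝ) := by
          rw [map_add, map_add, map_smul, map_smul, smul_eq_mul, smul_eq_mul,
            S.pairing, S.pairing, S.diag]
          push_cast
          ring
        rw [hc]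
        dsimp only
        module

lemma wordProd_eq_of_lcoefb_eq (i t : S.I) (lb lb' : List Bool)
    (h : lcoefb (S.A i t : ℝ) (S.A t i : ℝ) lb = lcoefb (S.A i t : ℝ) (S.A t i : ℝ) lb') :
    S.wordProd (S.word2 i t lb) = S.wordProd (S.word2 i t lb') := by
  refine Units.ext (LinearMap.ext fun x => ?_)
  have h1 := S.lcoefb_spec i t lb x
  have h2 := S.lcoefb_spec i t lb' x
  rw [ap] at h1 h2
  rw [h1, h2, h]

lemma shorten (i t : S.I) (m k : ℕ) (hm : 1 ≤ m) (hk : m ≤ k)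
    (hbr : S.wordProd (S.word2 i t (altB false m)) = S.wordProd (S.word2 i t (altB true m))) :
    ∃ lb' : List Bool, lb'.length + 1 = k ∧
      S.sUnit i * S.wordProd (S.word2 i t (altB false k)) = S.wordProd (S.word2 i t lb') := by
  obtain ⟨y, hy⟩ := altB_split m (k - m) false
  have hmk : m + (k - m) = k := by omega
  rw [hmk] at hy
  refine ⟨altB false (m - 1) ++ altB y (k - m), ?_, ?_⟩
  · rw [List.length_append, altB_length, altB_length]; omega
  · rw [hy, S.word2_append, S.word2_append, S.wordProd_append, S.wordProd_append,
      ← mul_assoc]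
    congr 1
    rw [hbr]
    have h2 : altB true m = true :: altB false (m - 1) := by
      cases m with
      | zero => omega
      | succ m' => simp [altB_succ]
    rw [h2, S.word2_true_cons, S.wordProd_cons, ← mul_assoc, S.sUnit_mul_self, one_mul]

lemma list_alt_or_dup (lb : List Bool) :
    (∃ x, lb = altB x lb.length) ∨ (∃ l₁ x l₂, lb = l₁ ++ x :: x :: l₂) := by
  induction lb with
  | nil => exact Or.inl ⟨true, rfl⟩
  | cons c l ih =>
      rcases ih with ⟨x, hx⟩ | ⟨l₁, x, l₂, h⟩
      · cases l with
        | nil => exact Or.inl ⟨c, rfl⟩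
        | cons d l' =>
            rw [List.length_cons, altB_succ] at hx
            injection hx with hxd hl'
            by_cases hcd : c = d
            · right
              refine ⟨[], c, l', ?_⟩
              simp [hcd]
            · left
              refine ⟨c, ?_⟩
              have hd : d = !c := by cases c <;> cases d <;> simp_all
              have h1 : l' = altB c l'.length := by
                conv_lhs => rw [hl']
                rw [← hxd, hd, Bool.not_not]
              rw [List.length_cons, List.length_cons, altB_succ, altB_succ,
                Bool.not_not, ← hd, ← h1]
      · right
        exact ⟨c :: l₁, x, l₂, by rw [h]; rfl⟩

end Rank2

section Trichotomy

variable (S : GCMRealization)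

lemma rank2_finite_case (i t : S.I) (a b : ℝ) (ha : (S.A i t : ℝ) = a)
    (hb : (S.A t i : ℝ) = b) (m : ℕ) (hm : 1 ≤ m) (k : ℕ)
    (hbr : lcoefb a b (altB false m) = lcoefb a b (altB true m))
    (hnn : ∀ k' < m, 0 ≤ (m2b a b (altB false k')).1.1
          ∧ 0 ≤ (m2b a b (altB false k')).1.2) :
    (∃ lb' : List Bool, lb'.length + 1 ≤ (altB false k).length ∧
        S.sUnit i * S.wordProd (S.word2 i t (altB false k)) = S.wordProd (S.word2 i t lb'))
    ∨ (0 ≤ (m2b (S.A i t : ℝ) (S.A t i : ℝ) (altB false k)).1.1 ∧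
       0 ≤ (m2b (S.A i t : ℝ) (S.A t i : ℝ) (altB false k)).1.2) := by
  rw [ha, hb]
  by_cases hk : k < m
  · exact Or.inr (hnn k hk)
  · left
    obtain ⟨lb', h1, h2⟩ := S.shorten i t m k hm (by omega)
      (S.wordProd_eq_of_lcoefb_eq i t _ _ (by rw [ha, hb]; exact hbr))
    exact ⟨lb', by rw [altB_length]; omega, h2⟩

lemma rank2_trichotomy (i t : S.I) (hit : i ≠ t) (lb : List Bool) :
    (∃ lb' : List Bool, lb'.length + 1 ≤ lb.length ∧
        S.sUnit i * S.wordProd (S.word2 i t lb) = S.wordProd (S.word2 i t lb'))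
    ∨ (0 ≤ (m2b (S.A i t : ℝ) (S.A t i : ℝ) lb).1.1 ∧
       0 ≤ (m2b (S.A i t : ℝ) (S.A t i : ℝ) lb).1.2) := by
  rcases list_alt_or_dup lb with ⟨x, hx⟩ | ⟨l₁, x, l₂, hd⟩
  · -- alternating
    cases x
    · -- starts with `false` (i.e. the letter t) : numeric analysis
      obtain ⟨az, haz_eq⟩ : ∃ az, S.A i t = az := ⟨_, rfl⟩
      obtain ⟨bz, hbz_eq⟩ : ∃ bz, S.A t i = bz := ⟨_, rfl⟩
      have haz : az ≤ 0 := haz_eq ▸ S.offDiag_nonpos i t hit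
      have hbz : bz ≤ 0 := hbz_eq ▸ S.offDiag_nonpos t i (Ne.symm hit)
      by_cases h4 : 4 ≤ az * bz
      · right
        rw [hx, haz_eq, hbz_eq]
        exact m2b_nonneg_of_four_le (az : ℝ) (bz : ℝ) (by exact_mod_cast haz)
          (by exact_mod_cast hbz) (by exact_mod_cast h4) lb.length
      · by_cases h0 : az = 0
        · have hb0 : bz = 0 := by
            have := (S.zero_iff i t).mp (by rw [haz_eq, h0])
            omega
          rw [hx]
          exact S.rank2_finite_case i t 0 0
            (by rw [haz_eq, h0]; norm_num) (by rw [hbz_eq, hb0]; norm_num)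
            2 (by norm_num) lb.length braid00 nn00
        · have hb0 : bz ≠ 0 := by
            intro h
            exact h0 (by have := (S.zero_iff t i).mp (by rw [hbz_eq, h]); omega)
          have ha1 : az ≤ -1 := by omega
          have hb1 : bz ≤ -1 := by omega
          have h3 : az * bz ≤ 3 := by omega
          have ha3 : -3 ≤ az := by nlinarith
          have hb3 : -3 ≤ bz := by nlinarith
          have hazv : az = -1 ∨ az = -2 ∨ az = -3 := by omega
          have hbzv : bz = -1 ∨ bz = -2 ∨ bz = -3 := by omega
          rw [hx]
          rcases hazv with rfl | rfl | rfl <;> rcases hbzv with rfl | rfl | rfl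
          · exact S.rank2_finite_case i t (-1) (-1) (by rw [haz_eq]; norm_num)
              (by rw [hbz_eq]; norm_num) 3 (by norm_num) lb.length braid11 nn11
          · exact S.rank2_finite_case i t (-1) (-2) (by rw [haz_eq]; norm_num)
              (by rw [hbz_eq]; norm_num) 4 (by norm_num) lb.length braid12 nn12
          · exact S.rank2_finite_case i t (-1) (-3) (by rw [haz_eq]; norm_num)
              (by rw [hbz_eq]; norm_num) 6 (by norm_num) lb.length braid13 nn13
          · exact S.rank2_finite_case i t (-2) (-1) (by rw [haz_eq]; norm_num)
              (by rw [hbz_eq]; norm_num) 4 (by norm_num) lb.length braid21 nn21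
          · exfalso; norm_num at h3
          · exfalso; norm_num at h3
          · exact S.rank2_finite_case i t (-3) (-1) (by rw [haz_eq]; norm_num)
              (by rw [hbz_eq]; norm_num) 6 (by norm_num) lb.length braid31 nn31
          · exfalso; norm_num at h3
          · exfalso; norm_num at h3
    · -- starts with `true` (i.e. the letter i)
      rcases Nat.eq_zero_or_pos lb.length with hz | hpos
      · right
        have : lb = [] := List.length_eq_zero_iff.mp hz
        subst this
        norm_num [m2b]
      · left
        obtain ⟨n, hn⟩ : ∃ n, lb.length = n + 1 := ⟨lb.length - 1, by omega⟩
        have hx' : lb = true :: altB false n := by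
          rw [hx, hn]; simp [altB_succ]
        refine ⟨altB false n, ?_, ?_⟩
        · rw [altB_length]; omega
        · rw [hx', S.word2_true_cons, S.wordProd_cons, ← mul_assoc,
            S.sUnit_mul_self, one_mul]
  · -- adjacent duplicate letters
    left
    refine ⟨true :: (l₁ ++ l₂), ?_, ?_⟩
    · rw [hd]; simp [List.length_append]; omega
    · rw [S.word2_true_cons, S.wordProd_cons]
      congr 1
      rw [hd, S.word2_append, S.word2_append, S.wordProd_append, S.wordProd_append]
      congr 1
      cases x
      · rw [S.word2_false_cons, S.word2_false_cons, S.wordProd_cons, S.wordProd_cons,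
          ← mul_assoc, S.sUnit_mul_self, one_mul]
      · rw [S.word2_true_cons, S.word2_true_cons, S.wordProd_cons, S.wordProd_cons,
          ← mul_assoc, S.sUnit_mul_self, one_mul]

lemma strip (i t : S.I) (n : ℕ) : ∀ w : S.U, w ∈ S.W → S.length w = n →
    ∃ (lb : List Bool) (u : S.U), u ∈ S.W ∧ w = S.wordProd (S.word2 i t lb) * u ∧
      n = lb.length + S.length u ∧ S.length u ≤ S.length (S.sUnit i * u) ∧
      S.length u ≤ S.length (S.sUnit t * u) := by
  induction n using Nat.strong_induction_on with | _ n IH =>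
  intro w hw hn
  by_cases hi : S.length (S.sUnit i * w) < S.length w
  · have hw' : S.sUnit i * w ∈ S.W := mul_mem (S.sUnit_mem_W i) hw
    have hlt : S.length (S.sUnit i * w) < n := hn ▸ hi
    obtain ⟨lb, u, hu, heq, hlen, h1, h2⟩ := IH _ hlt _ hw' rfl
    refine ⟨true :: lb, u, hu, ?_, ?_, h1, h2⟩
    · rw [S.word2_true_cons, S.wordProd_cons, mul_assoc, ← heq, ← mul_assoc,
        S.sUnit_mul_self, one_mul]
    · have hb := S.length_le_sUnit_mul_add i hw
      simp only [List.length_cons]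
      omega
  · by_cases ht : S.length (S.sUnit t * w) < S.length w
    · have hw' : S.sUnit t * w ∈ S.W := mul_mem (S.sUnit_mem_W t) hw
      have hlt : S.length (S.sUnit t * w) < n := hn ▸ ht
      obtain ⟨lb, u, hu, heq, hlen, h1, h2⟩ := IH _ hlt _ hw' rfl
      refine ⟨false :: lb, u, hu, ?_, ?_, h1, h2⟩
      · rw [S.word2_false_cons, S.wordProd_cons, mul_assoc, ← heq, ← mul_assoc,
          S.sUnit_mul_self, one_mul]
      · have hb := S.length_le_sUnit_mul_add t hw
        simp only [List.length_cons]
        omega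
    · exact ⟨[], w, hw, by rw [word2_nil, wordProd_nil, one_mul],
        by simp [hn], by omega, by omega⟩

/-- The key positivity theorem: if `ℓ(σᵢw) ≥ ℓ(w)` then `wC° ⊆ {⟨·,hᵢ⟩ > 0}`. -/
lemma BG : ∀ n : ℕ, ∀ w : S.U, w ∈ S.W → S.length w = n → ∀ i : S.I,
    S.length w ≤ S.length (S.sUnit i * w) → ∀ x : S.E, (∀ j, 0 < S.coroot j x) →
    0 < S.coroot i (S.ap w x) := by
  intro n
  induction n using Nat.strong_induction_on with | _ n IH =>
  intro w hw hn i hlen x hx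
  rcases Nat.eq_zero_or_pos n with h0 | hpos
  · have hw1 : w = 1 := S.eq_one_of_length_eq_zero hw (by omega)
    rw [hw1, ap_one]
    exact hx i
  · obtain ⟨l, hl, hlen_l⟩ := S.exists_reduced hw
    have hlne : l ≠ [] := by
      intro h
      rw [h] at hlen_l
      simp at hlen_l
      omega
    obtain ⟨td, l', rfl⟩ : ∃ td l', l = td :: l' := by
      cases l with
      | nil => exact absurd rfl hlne
      | cons a l' => exact ⟨a, l', rfl⟩
    have hstw : S.sUnit td * w = S.wordProd l' := by
      rw [← hl, S.wordProd_cons, ← mul_assoc, S.sUnit_mul_self, one_mul]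
    simp only [List.length_cons] at hlen_l
    have hdesc : S.length (S.sUnit td * w) < n := by
      have h1 := S.length_le l' hstw.symm
      omega
    have hti : i ≠ td := by
      intro h
      rw [← h] at hdesc
      omega
    obtain ⟨lb, u, hu, hwu, hnlen, hui, hut⟩ := S.strip i td n w hw hn
    have hk : 1 ≤ lb.length := by
      rcases Nat.eq_zero_or_pos lb.length with hz | h1
      · exfalso
        have hlb : lb = [] := List.length_eq_zero_iff.mp hz
        rw [hlb, word2_nil, wordProd_nil, one_mul] at hwu
        obtain rfl : w = u := hwu
        omega
      · exact h1
    have hlu : S.length u < n := by omega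
    rcases S.rank2_trichotomy i td hti lb with ⟨lb', hlb', heq⟩ | ⟨hm1, hm2⟩
    · exfalso
      obtain ⟨lu, hlu_eq, hlu_len⟩ := S.exists_reduced hu
      have hword : S.wordProd (S.word2 i td lb' ++ lu) = S.sUnit i * w := by
        rw [S.wordProd_append, hlu_eq, hwu, ← mul_assoc, heq]
      have hle := S.length_le _ hword
      rw [List.length_append, word2_length] at hle
      omega
    · have hx1 : 0 < S.coroot i (S.ap u x) := IH _ hlu u hu rfl i hui x hx
      have hx2 : 0 < S.coroot td (S.ap u x) := IH _ hlu u hu rfl td hut x hx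
      have happ : S.coroot i (S.ap w x)
          = (m2b (S.A i td : ℝ) (S.A td i : ℝ) lb).1.1 * S.coroot i (S.ap u x)
            + (m2b (S.A i td : ℝ) (S.A td i : ℝ) lb).1.2 * S.coroot td (S.ap u x) := by
        rw [hwu, S.ap_mul]
        exact (S.m2b_spec i td lb (S.ap u x)).1
      rw [happ]
      rcases lt_or_eq_of_le hm1 with h | h
      · nlinarith [mul_pos h hx1, mul_nonneg hm2 hx2.le]
      · have h12 : 0 < (m2b (S.A i td : ℝ) (S.A td i : ℝ) lb).1.2 := by
          rcases lt_or_eq_of_le hm2 with h' | h'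
          · exact h'
          · exfalso
            have hzero : ∀ z : S.E,
                S.coroot i (S.ap (S.wordProd (S.word2 i td lb)) z) = 0 := by
              intro z
              rw [(S.m2b_spec i td lb z).1, ← h, ← h']
              ring
            have hPz := hzero (S.ap (S.wordProd (S.word2 i td lb))⁻¹ (S.root i))
            rw [← S.ap_mul, mul_inv_cancel, ap_one, S.pairing, S.diag] at hPz
            norm_num at hPz
        nlinarith [mul_pos h12 hx2, mul_nonneg hm1 hx1.le]

end Trichotomy

section Chamber

variable (S : GCMRealization)

lemma exists_coroot_eq (f : S.I → ℝ) : ∃ x : S.E, ∀ i, S.coroot i x = f i := by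
  let Ψ : S.E →ₗ[ℝ] (S.I → ℝ) := LinearMap.pi S.coroot
  have hr : LinearMap.range Ψ = ⊤ := by
    by_contra hne
    obtain ⟨φ, hφ0, hφ⟩ := Submodule.exists_dual_map_eq_bot_of_lt_top
      (lt_top_iff_ne_top.mpr hne) inferInstance
    have hcomp : ∀ x : S.E, φ (Ψ x) = 0 := by
      intro x
      have hmem : φ (Ψ x) ∈ Submodule.map φ (LinearMap.range Ψ) :=
        Submodule.mem_map_of_mem ⟨x, rfl⟩
      rw [hφ] at hmem
      exact hmem
    have hrep : ∀ g : S.I → ℝ, φ g = ∑ i, g i * φ (Pi.single i 1) := by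
      intro g
      have hg : g = ∑ i, g i • (Pi.single i 1 : S.I → ℝ) := by
        funext j
        rw [Finset.sum_apply]
        simp [Pi.single_apply]
      conv_lhs => rw [hg]
      rw [map_sum]
      simp [map_smul, smul_eq_mul]
    have hzero : ∀ j, φ (Pi.single j 1) = 0 := by
      have hsum : ∑ i, φ (Pi.single i 1) • S.coroot i = 0 := by
        apply LinearMap.ext
        intro x
        have hcx := hcomp x
        rw [hrep (Ψ x)] at hcx
        simp only [LinearMap.coe_sum, Finset.sum_apply, LinearMap.smul_apply,
          smul_eq_mul, LinearMap.zero_apply]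
        have hΨ : ∀ i, Ψ x i = S.coroot i x := fun i => rfl
        simp only [hΨ] at hcx
        rw [← hcx]
        apply Finset.sum_congr rfl
        intro i _
        ring
      have hind := Fintype.linearIndependent_iff.mp S.coroot_indep
        (fun i => φ (Pi.single i 1)) hsum
      exact hind
    apply hφ0
    apply LinearMap.ext
    intro g
    rw [hrep g]
    simp [hzero]
  have hf : f ∈ LinearMap.range Ψ := by rw [hr]; trivial
  obtain ⟨x, hx⟩ := hf
  exact ⟨x, fun i => by rw [← hx]; rfl⟩

lemma exists_interior : ∃ x₀ : S.E, ∀ j, 0 < S.coroot j x₀ := by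
  obtain ⟨x, hx⟩ := S.exists_coroot_eq (fun _ => 1)
  exact ⟨x, fun j => by rw [hx]; norm_num⟩

lemma BG_chamber (v : S.U) (hv : v ∈ S.W) (i : S.I)
    (h : S.length v ≤ S.length (S.sUnit i * v)) {y : S.E} (hy : y ∈ S.chamber) :
    0 ≤ S.coroot i (S.ap v y) := by
  obtain ⟨x₀, hx₀⟩ := S.exists_interior
  by_contra hneg
  push_neg at hneg
  set F : S.E →ₗ[ℝ] ℝ := (S.coroot i).comp (v.val : S.E →ₗ[ℝ] S.E) with hF_def
  have hF : ∀ z : S.E, F z = S.coroot i (S.ap v z) := fun z => rfl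
  have hFx₀ : 0 < F x₀ := by rw [hF]; exact S.BG (S.length v) v hv rfl i h x₀ hx₀
  have hFy : F y < 0 := by rw [hF]; exact hneg
  have hd : F y - F x₀ < 0 := by linarith
  set μ : ℝ := F y / (F y - F x₀) with hμ
  have hcancel : μ * (F y - F x₀) = F y := div_mul_cancel₀ _ (ne_of_lt hd)
  have hμpos : 0 < μ := by nlinarith
  have hμlt : μ < 1 := by nlinarith
  set z := y + μ • (x₀ - y) with hz_def
  have hz : ∀ j, 0 < S.coroot j z := by
    intro j
    have hcz : S.coroot j z = (1 - μ) * S.coroot j y + μ * S.coroot j x₀ := by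
      rw [hz_def, map_add, map_smul, map_sub, smul_eq_mul]
      ring
    rw [hcz]
    nlinarith [hx₀ j, hy j]
  have hFz : F z = 0 := by
    have h1 : F z = F y + μ * (F x₀ - F y) := by
      rw [hz_def, map_add, map_smul, map_sub, smul_eq_mul]
    have h2 : F y + μ * (F x₀ - F y) = F y - μ * (F y - F x₀) := by ring
    rw [h1, h2, hcancel, sub_self]
  have hpos := S.BG (S.length v) v hv rfl i h z hz
  rw [← hF] at hpos
  rw [hFz] at hpos
  exact lt_irrefl _ hpos

lemma FD : ∀ n : ℕ, ∀ w : S.U, w ∈ S.W → S.length w = n → ∀ x : S.E, x ∈ S.chamber →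
    S.ap w x ∈ S.chamber → S.ap w x = x ∧ w ∈ S.WJ {j | S.coroot j x = 0} := by
  intro n
  induction n using Nat.strong_induction_on with | _ n IH =>
  intro w hw hn x hx hwx
  rcases Nat.eq_zero_or_pos n with h0 | hpos
  · have hw1 : w = 1 := S.eq_one_of_length_eq_zero hw (by omega)
    rw [hw1]
    exact ⟨S.ap_one x, one_mem _⟩
  · obtain ⟨l, hl, hlen_l⟩ := S.exists_reduced hw
    have hlne : l ≠ [] := by
      intro h
      rw [h] at hlen_l
      simp at hlen_l
      omega
    rcases List.eq_nil_or_concat' l with rfl | ⟨l'', i', rfl⟩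
    · exact absurd rfl hlne
    · have hws : w * S.sUnit i' = S.wordProd l'' := by
        rw [← hl, S.wordProd_append, S.wordProd_singleton, mul_assoc,
          S.sUnit_mul_self, mul_one]
      rw [List.length_append, List.length_singleton] at hlen_l
      have hlw' : S.length (w * S.sUnit i') ≤ n - 1 := by
        have := S.length_le l'' hws.symm
        omega
      have hv_mem : S.sUnit i' * w⁻¹ ∈ S.W := mul_mem (S.sUnit_mem_W i') (inv_mem hw)
      have hv_eq : S.sUnit i' * w⁻¹ = (w * S.sUnit i')⁻¹ := by
        rw [mul_inv_rev, S.sUnit_inv]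
      have hvlen : S.length (S.sUnit i' * w⁻¹) ≤ n - 1 := by
        rw [hv_eq, S.length_inv (mul_mem hw (S.sUnit_mem_W i'))]
        exact hlw'
      have hsv : S.sUnit i' * (S.sUnit i' * w⁻¹) = w⁻¹ := by
        rw [← mul_assoc, S.sUnit_mul_self, one_mul]
      have hsvlen : S.length (S.sUnit i' * (S.sUnit i' * w⁻¹)) = n := by
        rw [hsv, S.length_inv hw, hn]
      have hnonneg := S.BG_chamber (S.sUnit i' * w⁻¹) hv_mem i' (by omega) hwx
      have hvy : S.ap (S.sUnit i' * w⁻¹) (S.ap w x) = S.ap (S.sUnit i') x := by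
        rw [← S.ap_mul, mul_assoc, inv_mul_cancel, mul_one]
      have hci' : S.coroot i' (S.ap (S.sUnit i') x) = - S.coroot i' x := by
        rw [S.ap_sUnit, map_sub, map_smul, smul_eq_mul, S.pairing, S.diag]
        push_cast
        ring
      have hzero : S.coroot i' x = 0 := by
        rw [hvy, hci'] at hnonneg
        have := hx i'
        linarith
      have hsx : S.ap (S.sUnit i') x = x := by
        rw [S.ap_sUnit, hzero, zero_smul, sub_zero]
      have hw'_mem : w * S.sUnit i' ∈ S.W := mul_mem hw (S.sUnit_mem_W i')
      have hw'x : S.ap (w * S.sUnit i') x = S.ap w x := by rw [S.ap_mul, hsx]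
      have hlt : S.length (w * S.sUnit i') < n := by omega
      obtain ⟨hfix, hmem⟩ := IH (S.length (w * S.sUnit i')) hlt _ hw'_mem rfl x hx
        (by rw [hw'x]; exact hwx)
      have hwx_eq : S.ap w x = x := by rw [← hw'x]; exact hfix
      refine ⟨hwx_eq, ?_⟩
      have hww : w = (w * S.sUnit i') * S.sUnit i' := by
        rw [mul_assoc, S.sUnit_mul_self, mul_one]
      rw [hww]
      exact mul_mem hmem (S.sUnit_mem_WJ (show i' ∈ {j | S.coroot j x = 0} from hzero))

end Chamber

section Assembly

variable (S : GCMRealization)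

lemma WJ_fixes {J : Set S.I} {y : S.E} (hy : ∀ j ∈ J, S.coroot j y = 0) :
    ∀ u ∈ S.WJ J, S.ap u y = y := by
  intro u hu
  let St : Subgroup S.U :=
    { carrier := {u : S.U | S.ap u y = y}
      one_mem' := S.ap_one y
      mul_mem' := by
        rintro a b ha hb
        show S.ap (a * b) y = y
        rw [S.ap_mul]
        rw [show S.ap b y = y from hb, show S.ap a y = y from ha]
      inv_mem' := by
        rintro a ha
        show S.ap a⁻¹ y = y
        conv_lhs => rw [← show S.ap a y = y from ha]
        rw [← S.ap_mul, inv_mul_cancel, S.ap_one] }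
  have hle : S.WJ J ≤ St := by
    rw [WJ, Subgroup.closure_le]
    rintro _ ⟨j, hj, rfl⟩
    show S.ap (S.sUnit j) y = y
    rw [S.ap_sUnit, hy j hj, zero_smul, sub_zero]
  exact hle hu

lemma sUnit_commute {i j : S.I} (hij : S.A i j = 0) (hji : S.A j i = 0) :
    S.sUnit i * S.sUnit j = S.sUnit j * S.sUnit i := by
  refine Units.ext (LinearMap.ext fun x => ?_)
  show S.ap (S.sUnit i * S.sUnit j) x = S.ap (S.sUnit j * S.sUnit i) x
  rw [S.ap_mul, S.ap_mul, S.ap_sUnit, S.ap_sUnit, S.ap_sUnit, S.ap_sUnit,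
    map_sub, map_smul, map_sub, map_smul, smul_eq_mul, smul_eq_mul,
    S.pairing, S.pairing, hij, hji]
  push_cast
  module

lemma WJ_elements_commute {J K : Set S.I}
    (h : ∀ i ∈ J, ∀ j ∈ K, S.A i j = 0) :
    ∀ u ∈ S.WJ J, ∀ v ∈ S.WJ K, u * v = v * u := by
  have h1 : ∀ i ∈ J, ∀ v ∈ S.WJ K, S.sUnit i * v = v * S.sUnit i := by
    intro i hi v hv
    have hle : S.WJ K ≤ Subgroup.centralizer {S.sUnit i} := by
      rw [WJ, Subgroup.closure_le]
      rintro _ ⟨j, hj, rfl⟩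
      apply Subgroup.mem_centralizer_iff.mpr
      rintro g (rfl : g = S.sUnit i)
      exact S.sUnit_commute (h i hi j hj) ((S.zero_iff i j).mp (h i hi j hj))
    exact Subgroup.mem_centralizer_iff.mp (hle hv) _ rfl
  intro u hu v hv
  have hle : S.WJ J ≤ Subgroup.centralizer (S.WJ K : Set S.U) := by
    rw [WJ, Subgroup.closure_le]
    rintro _ ⟨i, hi, rfl⟩
    apply Subgroup.mem_centralizer_iff.mpr
    intro g hg
    exact (h1 i hi g hg).symm
  exact (Subgroup.mem_centralizer_iff.mp (hle hu) v hv).symm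

lemma closedFacet_mono {Θ Θ' : Set S.I} (h : Θ ⊆ Θ') :
    S.closedFacet Θ' ⊆ S.closedFacet Θ := by
  intro y hy
  refine ⟨fun j hj => hy.1 j (h hj), fun j hj => ?_⟩
  by_cases hj' : j ∈ Θ'
  · exact le_of_eq (hy.1 j hj').symm
  · exact hy.2 j hj'

lemma perp_mono {Θ Θ' : Set S.I} (h : Θ ⊆ Θ') : S.perp Θ' ⊆ S.perp Θ :=
  fun i hi j hj => hi j (h hj)

lemma WJ_mono {J K : Set S.I} (h : J ⊆ K) : S.WJ J ≤ S.WJ K :=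
  Subgroup.closure_mono (Set.image_mono h)

/-- The backward implication of the inclusion criterion. -/
lemma incl_of (Θ Θ' : Set S.I) (σ σ' : S.U) (hsub : Θ ⊆ Θ')
    (hmem : σ⁻¹ * σ' ∈ (S.WJ (S.perp Θ) : Set S.U) * (S.WJ Θ' : Set S.U)) :
    S.ap σ' '' S.faceR Θ' ⊆ S.ap σ '' S.faceR Θ := by
  rw [Set.mem_mul] at hmem
  obtain ⟨α, hα, β, hβ, hαβ⟩ := hmem
  rintro _ ⟨p, ⟨γ, hγ, y, hy, rfl⟩, rfl⟩
  refine ⟨S.ap (α * γ) y, ⟨α * γ, mul_mem hα (S.WJ_mono (S.perp_mono hsub) hγ), y,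
    S.closedFacet_mono hsub hy, rfl⟩, ?_⟩
  have hcomm : β * γ = γ * β :=
    S.WJ_elements_commute (J := Θ') (K := S.perp Θ')
      (fun i hi j hj => (S.zero_iff j i).mp (hj i hi)) β hβ γ hγ
  have hfix : S.ap β y = y := S.WJ_fixes (fun j hj => hy.1 j hj) β hβ
  have hσ'_eq : σ' = σ * (α * β) := by
    rw [hαβ, ← mul_assoc, mul_inv_cancel, one_mul]
  have hσ'γ : σ' * γ = (σ * (α * γ)) * β := by
    rw [hσ'_eq, mul_assoc σ, mul_assoc α, mul_assoc σ, mul_assoc α, hcomm]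
  calc S.ap σ (S.ap (α * γ) y) = S.ap (σ * (α * γ)) y := (S.ap_mul _ _ _).symm
    _ = S.ap (σ * (α * γ)) (S.ap β y) := by rw [hfix]
    _ = S.ap ((σ * (α * γ)) * β) y := (S.ap_mul _ _ _).symm
    _ = S.ap (σ' * γ) y := by rw [hσ'γ]
    _ = S.ap σ' (S.ap γ y) := S.ap_mul _ _ _

/-- The forward implication of the inclusion criterion. -/
lemma of_incl (Θ Θ' : Set S.I) (σ σ' : S.U) (hσ : σ ∈ S.W) (hσ' : σ' ∈ S.W)
    (h : S.ap σ' '' S.faceR Θ' ⊆ S.ap σ '' S.faceR Θ) :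
    Θ ⊆ Θ' ∧ σ⁻¹ * σ' ∈ (S.WJ (S.perp Θ) : Set S.U) * (S.WJ Θ' : Set S.U) := by
  classical
  obtain ⟨x₀, hx₀⟩ := S.exists_coroot_eq (fun j => if j ∈ Θ' then 0 else 1)
  have hx₀Θ' : ∀ j ∈ Θ', S.coroot j x₀ = 0 := fun j hj => by rw [hx₀ j, if_pos hj]
  have hx₀n : ∀ j ∉ Θ', S.coroot j x₀ = 1 := fun j hj => by rw [hx₀ j, if_neg hj]
  have hx₀cf : x₀ ∈ S.closedFacet Θ' :=
    ⟨hx₀Θ', fun j hj => by rw [hx₀n j hj]; norm_num⟩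
  have hx₀face : x₀ ∈ S.faceR Θ' := ⟨1, one_mem _, x₀, hx₀cf, (S.ap_one x₀).symm⟩
  obtain ⟨z, hz, hze⟩ := h ⟨x₀, hx₀face, rfl⟩
  obtain ⟨α, hα, y, hy, rfl⟩ := hz
  have hze' : S.ap (σ * α) y = S.ap σ' x₀ := by rw [S.ap_mul]; exact hze
  have hkey : S.ap (α⁻¹ * (σ⁻¹ * σ')) x₀ = y := by
    have hform : α⁻¹ * (σ⁻¹ * σ') = (σ * α)⁻¹ * σ' := by
      rw [mul_inv_rev, mul_assoc]
    rw [hform, S.ap_mul, ← hze', ← S.ap_mul, inv_mul_cancel, S.ap_one]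
  have hw : α⁻¹ * (σ⁻¹ * σ') ∈ S.W :=
    mul_mem (inv_mem (S.WJ_le_W _ hα)) (mul_mem (inv_mem hσ) hσ')
  have hx₀ch : x₀ ∈ S.chamber := S.closedFacet_subset_chamber Θ' hx₀cf
  have hych : S.ap (α⁻¹ * (σ⁻¹ * σ')) x₀ ∈ S.chamber := by
    rw [hkey]; exact S.closedFacet_subset_chamber Θ hy
  obtain ⟨hfix, hmem⟩ := S.FD (S.length (α⁻¹ * (σ⁻¹ * σ'))) _ hw rfl x₀ hx₀ch hych
  have hJ : {j | S.coroot j x₀ = 0} = Θ' := by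
    ext j
    constructor
    · intro hj
      by_contra hj'
      have hj2 : S.coroot j x₀ = 0 := hj
      rw [hx₀n j hj'] at hj2
      norm_num at hj2
    · exact hx₀Θ' j
  rw [hJ] at hmem
  have hyx : y = x₀ := by rw [← hkey, hfix]
  constructor
  · intro j hj
    by_contra hj'
    have h0 : S.coroot j y = 0 := hy.1 j hj
    rw [hyx, hx₀n j hj'] at h0
    norm_num at h0
  · have hprod : σ⁻¹ * σ' = α * (α⁻¹ * (σ⁻¹ * σ')) := by
      rw [← mul_assoc, mul_inv_cancel, one_mul]
    rw [hprod]
    exact Set.mul_mem_mul hα hmem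

end Assembly

-- MAIN_HERE

/-- For `σ, σ' ∈ W` and special `Θ, Θ' ⊆ I`:
`σ'R(Θ') ⊆ σR(Θ)` iff `Θ' ⊇ Θ` and `σ⁻¹σ' ∈ W_{Θ⊥} W_{Θ'}`.  Consequently,
distinct faces of the Tits cone of the same type are incomparable under
inclusion. -/
theorem face_inclusion_criterion (S : GCMRealization) (Θ Θ' : Set S.I)
    (hΘ : S.special Θ) (hΘ' : S.special Θ') (σ σ' : S.U)
    (hσ : σ ∈ S.W) (hσ' : σ' ∈ S.W) :
    (S.ap σ' '' S.faceR Θ' ⊆ S.ap σ '' S.faceR Θ ↔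
      Θ ⊆ Θ' ∧ σ⁻¹ * σ' ∈ (S.WJ (S.perp Θ) : Set S.U) * (S.WJ Θ' : Set S.U)) ∧
    (Θ' = Θ → S.ap σ' '' S.faceR Θ' ≠ S.ap σ '' S.faceR Θ →
      ¬ S.ap σ' '' S.faceR Θ' ⊆ S.ap σ '' S.faceR Θ) := by
  constructor
  · constructor
    · exact fun h => S.of_incl Θ Θ' σ σ' hσ hσ' h
    · rintro ⟨h1, h2⟩
      exact S.incl_of Θ Θ' σ σ' h1 h2
  · intro hEq hne hsub
    obtain ⟨h1, h2⟩ := S.of_incl Θ Θ' σ σ' hσ hσ' hsub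
    subst hEq
    rw [Set.mem_mul] at h2
    obtain ⟨p, hp, q, hq, hpq⟩ := h2
    have hcomm : p * q = q * p :=
      S.WJ_elements_commute (J := S.perp Θ') (K := Θ') (fun i hi j hj => hi j hj) p hp q hq
    have hrev : σ'⁻¹ * σ ∈ (S.WJ (S.perp Θ') : Set S.U) * (S.WJ Θ' : Set S.U) := by
      have hx : σ'⁻¹ * σ = p⁻¹ * q⁻¹ := by
        rw [← mul_inv_rev q p, ← hcomm, hpq, mul_inv_rev, inv_inv]
      rw [hx]
      exact Set.mul_mem_mul (inv_mem hp) (inv_mem hq)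
    exact hne (Set.Subset.antisymm hsub (S.incl_of Θ' Θ' σ' σ (subset_refl Θ') hrev))

end GCMRealization
end

section
/- The face monoid Ŵ is an inverse monoid, i.e. for every x ∈ Ŵ there is a unique y ∈ Ŵ with xyx = x and yxy = y, and the inverse of σε(R) (σ ∈ W, R a face of X) is ε(R)σ⁻¹. -/
open scoped Pointwise

namespace GCMRealization

variable (S : GCMRealization)

lemma ap_inv_ap (σ : S.U) (x : S.E) : S.ap σ⁻¹ (S.ap σ x) = x := by
  rw [← S.ap_mul, inv_mul_cancel, S.ap_one]

lemma ap_ap_inv (σ : S.U) (x : S.E) : S.ap σ (S.ap σ⁻¹ x) = x := by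
  rw [← S.ap_mul, mul_inv_cancel, S.ap_one]

lemma ap_injective (σ : S.U) : Function.Injective (S.ap σ) := by
  intro a b hab
  have := congrArg (S.ap σ⁻¹) hab
  rwa [S.ap_inv_ap, S.ap_inv_ap] at this

lemma fmk_mul (p q : S.PreHat) : S.fmk (p * q) = S.fmk p * S.fmk q :=
  map_mul S.hatCon.mk' p q

lemma fmk_eq_iff {p q : S.PreHat} : S.fmk p = S.fmk q ↔ S.hatCon p q := Con.eq _

lemma fmk_eq_of {p q : S.PreHat} (h1 : p.carrier = q.carrier) (h2 : p.w = q.w) :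
    S.fmk p = S.fmk q :=
  (S.fmk_eq_iff).mpr ⟨h1, fun x _ => by rw [h2]⟩

lemma eps_titsCone : S.eps S.titsCone subset_rfl = 1 := map_one S.hatCon.mk'

lemma wEl_mem (σ : S.W) : S.wEl σ ∈ S.hatW :=
  Submonoid.subset_closure (Or.inl ⟨σ, rfl⟩)

lemma genEl_mul (σ τ : S.W) (R T : Set S.E) (hR : R ⊆ S.titsCone) (hT : T ⊆ S.titsCone) :
    S.genEl σ R hR * S.genEl τ T hT =
      S.genEl (σ * τ) (S.ap ↑τ ⁻¹' R ∩ T) (fun _ hx => hT hx.2) :=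
  (S.fmk_mul _ _).symm

lemma eps_conj_mul (τ : S.W) (R T : Set S.E) (hR : R ⊆ S.titsCone) (hT : T ⊆ S.titsCone) :
    S.eps (S.ap ↑τ ⁻¹' R ∩ T) (fun _ hx => hT hx.2) =
      S.wEl τ⁻¹ * S.eps R hR * S.wEl τ * S.eps T hT := by
  simp only [wEl, eps]
  rw [← S.fmk_mul, ← S.fmk_mul, ← S.fmk_mul]
  refine (S.fmk_eq_of ?_ ?_).symm
  · ext z
    simp only [PreHat.mul_carrier, PreHat.mul_w, Set.mem_inter_iff, Set.mem_preimage,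
      OneMemClass.coe_one, S.ap_one, InvMemClass.coe_inv, Subgroup.coe_mul, S.ap_mul]
    constructor
    · tauto
    · rintro ⟨h1, h2⟩
      exact ⟨⟨⟨hR h1, h1⟩, hT h2⟩, h2⟩
  · show ((τ⁻¹ * 1) * τ) * 1 = (1 : S.W)
    group

lemma mem_hatW_struct {x : S.FM} (hx : x ∈ S.hatW) :
    ∃ (σ : S.W) (R : Set S.E) (h : R ⊆ S.titsCone),
      x = S.genEl σ R h ∧ S.eps R h ∈ S.hatW := by
  induction hx using Submonoid.closure_induction with
  | mem z hz =>
    rcases hz with ⟨σ, rfl⟩ | ⟨R, hF, rfl⟩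
    · exact ⟨σ, S.titsCone, subset_rfl, rfl, by rw [S.eps_titsCone]; exact one_mem _⟩
    · exact ⟨1, R, S.faces_subset hF, rfl,
        Submonoid.subset_closure (Or.inr ⟨R, hF, rfl⟩)⟩
  | one =>
    exact ⟨1, S.titsCone, subset_rfl, (map_one S.hatCon.mk').symm,
      by rw [S.eps_titsCone]; exact one_mem _⟩
  | mul a b ha hb iha ihb =>
    obtain ⟨σ, R, hR, rfl, hεR⟩ := iha
    obtain ⟨τ, T, hT, rfl, hεT⟩ := ihb
    refine ⟨σ * τ, S.ap ↑τ ⁻¹' R ∩ T, fun _ hx => hT hx.2,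
      S.genEl_mul σ τ R T hR hT, ?_⟩
    rw [S.eps_conj_mul τ R T hR hT]
    exact mul_mem (mul_mem (mul_mem (S.wEl_mem _) hεR) (S.wEl_mem _)) hεT

lemma key (σ : S.W) (R : Set S.E) (h : R ⊆ S.titsCone) :
    S.genEl σ R h * (S.eps R h * S.wEl σ⁻¹) * S.genEl σ R h = S.genEl σ R h ∧
    (S.eps R h * S.wEl σ⁻¹) * S.genEl σ R h * (S.eps R h * S.wEl σ⁻¹) =
      S.eps R h * S.wEl σ⁻¹ := by
  constructor
  · rw [genEl, eps, wEl, ← S.fmk_mul, ← S.fmk_mul, ← S.fmk_mul]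
    refine S.fmk_eq_of ?_ ?_
    · ext z
      simp only [PreHat.mul_carrier, PreHat.mul_w, Set.mem_inter_iff, Set.mem_preimage,
        OneMemClass.coe_one, S.ap_one, InvMemClass.coe_inv, Subgroup.coe_mul,
        S.ap_mul, S.ap_inv_ap]
      constructor
      · tauto
      · intro hz
        exact ⟨⟨hz, hz, S.ap_mem_titsCone σ.2 (h hz)⟩, hz⟩
    · show (σ * (1 * σ⁻¹)) * σ = σ
      group
  · rw [genEl, eps, wEl, ← S.fmk_mul, ← S.fmk_mul, ← S.fmk_mul]
    refine S.fmk_eq_of ?_ ?_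
    · ext z
      simp only [PreHat.mul_carrier, PreHat.mul_w, Set.mem_inter_iff, Set.mem_preimage,
        OneMemClass.coe_one, S.ap_one, InvMemClass.coe_inv, Subgroup.coe_mul,
        S.ap_mul, S.ap_inv_ap, S.ap_ap_inv]
      constructor
      · tauto
      · rintro ⟨h1, h2⟩
        exact ⟨⟨⟨h1, h2⟩, h1⟩, h1, h2⟩
    · show ((1 * σ⁻¹) * σ) * (1 * σ⁻¹) = 1 * σ⁻¹
      group

lemma unique_inv (σ τ : S.W) (R T : Set S.E) (hR : R ⊆ S.titsCone) (hT : T ⊆ S.titsCone)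
    (h1 : S.genEl σ R hR * S.genEl τ T hT * S.genEl σ R hR = S.genEl σ R hR)
    (h2 : S.genEl τ T hT * S.genEl σ R hR * S.genEl τ T hT = S.genEl τ T hT) :
    S.genEl τ T hT = S.eps R hR * S.wEl σ⁻¹ := by
  rw [genEl, genEl, ← S.fmk_mul, ← S.fmk_mul] at h1
  rw [genEl, genEl, ← S.fmk_mul, ← S.fmk_mul] at h2
  obtain ⟨hc1, hw1⟩ := S.fmk_eq_iff.mp h1
  obtain ⟨hc2, hw2⟩ := S.fmk_eq_iff.mp h2
  -- unpack the carrier/word conditions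
  have memP : ∀ r ∈ R, S.ap ↑τ (S.ap ↑σ r) ∈ R ∧ S.ap ↑σ r ∈ T := by
    intro r hr
    have : r ∈ ((⟨σ, R, hR⟩ * ⟨τ, T, hT⟩ : S.PreHat) * ⟨σ, R, hR⟩).carrier := hc1 ▸ hr
    simp only [PreHat.mul_carrier, PreHat.mul_w, Set.mem_inter_iff, Set.mem_preimage,
      Subgroup.coe_mul, S.ap_mul] at this
    exact this.1
  have memQ : ∀ t ∈ T, S.ap ↑σ (S.ap ↑τ t) ∈ T ∧ S.ap ↑τ t ∈ R := by
    intro t ht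
    have : t ∈ ((⟨τ, T, hT⟩ * ⟨σ, R, hR⟩ : S.PreHat) * ⟨τ, T, hT⟩).carrier := hc2 ▸ ht
    simp only [PreHat.mul_carrier, PreHat.mul_w, Set.mem_inter_iff, Set.mem_preimage,
      Subgroup.coe_mul, S.ap_mul] at this
    exact this.1
  have fixT : ∀ t ∈ T, S.ap ↑σ (S.ap ↑τ t) = t := by
    intro t ht
    have ht' : t ∈ ((⟨τ, T, hT⟩ * ⟨σ, R, hR⟩ : S.PreHat) * ⟨τ, T, hT⟩).carrier := hc2 ▸ ht
    have := hw2 t ht'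
    simp only [PreHat.mul_w, PreHat.mul_carrier, Subgroup.coe_mul, S.ap_mul] at this
    exact S.ap_injective ↑τ this
  have apT : ∀ t ∈ T, S.ap ↑τ t = S.ap (↑σ)⁻¹ t := by
    intro t ht
    have := congrArg (S.ap (↑σ : S.U)⁻¹) (fixT t ht)
    rwa [S.ap_inv_ap] at this
  rw [genEl, eps, wEl, ← S.fmk_mul]
  refine S.fmk_eq_iff.mpr ⟨?_, ?_⟩
  · ext z
    simp only [PreHat.mul_carrier, PreHat.mul_w, Set.mem_inter_iff, Set.mem_preimage,
      OneMemClass.coe_one, S.ap_one, InvMemClass.coe_inv, Subgroup.coe_mul, S.ap_mul]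
    constructor
    · intro hz
      refine ⟨?_, hT hz⟩
      rw [← apT z hz]
      exact (memQ z hz).2
    · rintro ⟨hz1, hz2⟩
      have := (memP _ hz1).2
      rwa [S.ap_ap_inv] at this
  · intro z hz
    simp only [PreHat.mul_w, PreHat.mul_carrier, Subgroup.coe_mul, S.ap_mul, OneMemClass.coe_one, S.ap_one,
      InvMemClass.coe_inv]
    exact apT z hz

/-- The face monoid `Ŵ` is an inverse monoid: every `x ∈ Ŵ`
has a unique `y ∈ Ŵ` with `xyx = x` and `yxy = y`; moreover the inverse of
`σε(R)` is `ε(R)σ⁻¹`. -/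
theorem hatW_inverse_monoid (S : GCMRealization) :
    (∀ x ∈ S.hatW, ∃! y, y ∈ S.hatW ∧ x * y * x = x ∧ y * x * y = y) ∧
    (∀ (σ : S.W) (R : Set S.E) (h : R ∈ S.faces),
      S.genEl σ R (S.faces_subset h) * (S.eps R (S.faces_subset h) * S.wEl σ⁻¹) *
          S.genEl σ R (S.faces_subset h) = S.genEl σ R (S.faces_subset h) ∧
      (S.eps R (S.faces_subset h) * S.wEl σ⁻¹) * S.genEl σ R (S.faces_subset h) *
          (S.eps R (S.faces_subset h) * S.wEl σ⁻¹) =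
        S.eps R (S.faces_subset h) * S.wEl σ⁻¹) := by
  constructor
  · intro x hx
    obtain ⟨σ, R, h, rfl, hεR⟩ := S.mem_hatW_struct hx
    refine ⟨S.eps R h * S.wEl σ⁻¹,
      ⟨mul_mem hεR (S.wEl_mem _), (S.key σ R h).1, (S.key σ R h).2⟩, ?_⟩
    rintro y ⟨hyW, hy1, hy2⟩
    obtain ⟨τ, T, hT, rfl, -⟩ := S.mem_hatW_struct hyW
    exact S.unique_inv σ τ R T h hT hy1 hy2
  · intro σ R h
    exact S.key σ R (S.faces_subset h)

end GCMRealization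
end
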